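/- For f⁰ an n-tuple of points in ℝ³ and f^{(k)} = A(n)^k f⁰, the edge energy decays geometrically: ‖f^{(k)} - Tf^{(k)}‖² ≤ λ_1(n)^{2k} ‖f⁰ - Tf⁰‖². -/

import Mathlib

open Matrix Real Finset

/-- The cyclic shift permutation matrix: `T eᵢ = e_{i+1}`. -/
def shiftMat (n : ℕ) [NeZero n] : Matrix (Fin n) (Fin n) ℝ :=
  Matrix.of fun i j => if j = i + 1 then 1 else 0

/-- The matrix `B(n) = 3 Iₙ - T - Tᵗ`. -/
def Bmat (n : ℕ) [NeZero n] : Matrix (Fin n) (Fin n) ℝ :=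
  (3 : ℝ) • (1 : Matrix (Fin n) (Fin n) ℝ) - shiftMat n - (shiftMat n)ᵀ

/-- `A(n) = B(n)⁻¹`. -/
noncomputable def Amat (n : ℕ) [NeZero n] : Matrix (Fin n) (Fin n) ℝ := (Bmat n)⁻¹

/-- `λ₁(n) = 1/(1 + 4 sin²(π/n))`. -/
noncomputable def lam1 (n : ℕ) : ℝ := 1 / (1 + 4 * Real.sin (Real.pi / n) ^ 2)


/-- Componentwise action of an `n × n` matrix on an `n`-tuple of points of `ℝ³`. -/
noncomputable def applyMat {n : ℕ} (M : Matrix (Fin n) (Fin n) ℝ)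
    (g : Fin n → EuclideanSpace ℝ (Fin 3)) : Fin n → EuclideanSpace ℝ (Fin 3) :=
  fun i => ∑ j, M i j • g j

/-- The cyclic shift acting on `n`-tuples of points of `ℝ³`. -/
def shiftTup {n : ℕ} [NeZero n] (g : Fin n → EuclideanSpace ℝ (Fin 3)) :
    Fin n → EuclideanSpace ℝ (Fin 3) := fun i => g (i + 1)

/-- `‖g‖² = Σᵢ |gᵢ|²`. -/
noncomputable def sqE {n : ℕ} (g : Fin n → EuclideanSpace ℝ (Fin 3)) : ℝ :=
  ∑ i, ‖g i‖ ^ 2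


noncomputable def zz (n : ℕ) : ℂ := Complex.exp (2 * Real.pi * Complex.I / n)

noncomputable def ee (n : ℕ) (a : Fin n) : ℂ := zz n ^ (a : ℕ)

section basic
variable (n : ℕ) [NeZero n]

lemma hprim : IsPrimitiveRoot (zz n) n := Complex.isPrimitiveRoot_exp n (NeZero.ne n)

lemma zz_pow_n : zz n ^ n = 1 := (hprim n).pow_eq_one

lemma zz_pow_mod (m : ℕ) : zz n ^ (m % n) = zz n ^ m := by
  conv_rhs => rw [← Nat.div_add_mod m n]
  rw [pow_add, pow_mul, zz_pow_n, one_pow, one_mul]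

lemma ee_add (a b : Fin n) : ee n (a + b) = ee n a * ee n b := by
  unfold ee
  rw [Fin.val_add, zz_pow_mod, pow_add]

lemma ee_zero : ee n 0 = 1 := by simp [ee]

lemma ee_pow (a : Fin n) (i : Fin n) : ee n (i * a) = ee n a ^ (i : ℕ) := by
  unfold ee
  rw [Fin.val_mul, zz_pow_mod, pow_mul']

lemma ee_ne_zero (a : Fin n) : ee n a ≠ 0 := pow_ne_zero _ (Complex.exp_ne_zero _)

lemma ee_neg_mul (a : Fin n) : ee n (-a) * ee n a = 1 := by
  rw [← ee_add, neg_add_cancel, ee_zero]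

lemma conj_zz : (starRingEnd ℂ) (zz n) = (zz n)⁻¹ := by
  unfold zz
  rw [← Complex.exp_conj, ← Complex.exp_neg]
  congr 1
  have : ((n : ℂ)) = ((n : ℝ) : ℂ) := by push_cast; ring
  rw [this]
  simp [map_div₀, Complex.conj_I, map_ofNat]
  ring

lemma conj_ee (a : Fin n) : (starRingEnd ℂ) (ee n a) = ee n (-a) := by
  have h1 : (starRingEnd ℂ) (ee n a) * ee n a = 1 := by
    unfold ee
    have hz : zz n ≠ 0 := Complex.exp_ne_zero _
    rw [map_pow, conj_zz, ← mul_pow, inv_mul_cancel₀ hz, one_pow]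
  have h2 := ee_neg_mul n a
  rw [eq_inv_of_mul_eq_one_left h1, eq_inv_of_mul_eq_one_left h2]

lemma orth (a : Fin n) (ha : a ≠ 0) : ∑ i : Fin n, ee n (i * a) = 0 := by
  have hz1 : ee n a ≠ 1 := by
    apply (hprim n).pow_ne_one_of_pos_of_lt _ a.isLt
    exact (fun h => ha (Fin.ext h))
  have hzn : ee n a ^ n = 1 := by
    unfold ee; rw [← pow_mul, mul_comm, pow_mul, zz_pow_n, one_pow]
  calc ∑ i : Fin n, ee n (i * a) = ∑ i : Fin n, ee n a ^ (i : ℕ) := by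
        simp_rw [ee_pow]
    _ = ∑ i ∈ range n, ee n a ^ i := Fin.sum_univ_eq_sum_range _ n
    _ = (ee n a ^ n - 1) / (ee n a - 1) := geom_sum_eq hz1 n
    _ = 0 := by rw [hzn, sub_self, zero_div]

lemma orth' (a : Fin n) : ∑ i : Fin n, ee n (i * a) = if a = 0 then (n : ℂ) else 0 := by
  split_ifs with h
  · subst h; simp [ee_zero]
  · exact orth n a h

end basic

noncomputable def coef (n : ℕ) (f : Fin n → ℝ) (j : Fin n) : ℂ :=
  ∑ i, (f i : ℂ) * (starRingEnd ℂ) (ee n (i * j))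

section parseval
variable (n : ℕ) [NeZero n]

lemma inner_orth (i i' : Fin n) :
    ∑ j : Fin n, (starRingEnd ℂ) (ee n (i * j)) * ee n (i' * j)
      = if i' = i then (n : ℂ) else 0 := by
  have h : ∀ j : Fin n, (starRingEnd ℂ) (ee n (i * j)) * ee n (i' * j)
      = ee n (j * (i' - i)) := by
    intro j
    rw [conj_ee, ← ee_add]
    congr 1
    open Fin.CommRing in ring
  simp_rw [h, orth' n (i' - i), sub_eq_zero]

lemma parseval (f : Fin n → ℝ) :
    ∑ j, Complex.normSq (coef n f j) = n * ∑ i, f i ^ 2 := by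
  have hconj : ∀ j, (starRingEnd ℂ) (coef n f j) = ∑ i', (f i' : ℂ) * ee n (i' * j) := by
    intro j
    unfold coef
    rw [map_sum]
    refine Finset.sum_congr rfl fun i' _ => ?_
    rw [_root_.map_mul, Complex.conj_conj, Complex.conj_ofReal]
  have key : ∑ j, coef n f j * (starRingEnd ℂ) (coef n f j) = (n : ℂ) * ∑ i, (f i : ℂ) ^ 2 := by
    calc ∑ j, coef n f j * (starRingEnd ℂ) (coef n f j)
        = ∑ j : Fin n, ∑ i, ∑ i', ((f i : ℂ) * f i')
            * ((starRingEnd ℂ) (ee n (i * j)) * ee n (i' * j)) := by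
          refine Finset.sum_congr rfl fun j _ => ?_
          rw [hconj, coef, Finset.sum_mul_sum]
          refine Finset.sum_congr rfl fun i _ => Finset.sum_congr rfl fun i' _ => ?_
          ring
      _ = ∑ i, ∑ i' : Fin n, ((f i : ℂ) * f i')
            * ∑ j, (starRingEnd ℂ) (ee n (i * j)) * ee n (i' * j) := by
          rw [Finset.sum_comm]
          refine Finset.sum_congr rfl fun i _ => ?_
          rw [Finset.sum_comm]
          refine Finset.sum_congr rfl fun i' _ => ?_
          rw [Finset.mul_sum]
      _ = ∑ i, ((f i : ℂ) * f i) * n := by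
          refine Finset.sum_congr rfl fun i _ => ?_
          simp_rw [inner_orth, mul_ite, mul_zero]
          rw [Finset.sum_ite_eq' Finset.univ i (fun i' => (f i : ℂ) * f i' * n)]
          simp
      _ = (n : ℂ) * ∑ i, (f i : ℂ) ^ 2 := by
          rw [Finset.mul_sum]
          refine Finset.sum_congr rfl fun i _ => ?_
          ring
  have lhs : ∑ j, coef n f j * (starRingEnd ℂ) (coef n f j)
      = ((∑ j, Complex.normSq (coef n f j) : ℝ) : ℂ) := by
    push_cast
    refine Finset.sum_congr rfl fun j _ => ?_
    rw [Complex.mul_conj]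
  rw [lhs] at key
  have : ((∑ j, Complex.normSq (coef n f j) : ℝ) : ℂ) = (((n : ℝ) * ∑ i, f i ^ 2 : ℝ) : ℂ) := by
    rw [key]; push_cast; ring
  exact_mod_cast this

lemma coef_shift (f : Fin n → ℝ) (j : Fin n) :
    coef n (fun i => f i - f (i + 1)) j = (1 - ee n j) * coef n f j := by
  unfold coef
  have h2 : ∑ i : Fin n, ((f (i + 1) : ℂ)) * (starRingEnd ℂ) (ee n (i * j))
      = ee n j * ∑ i, (f i : ℂ) * (starRingEnd ℂ) (ee n (i * j)) := by
    rw [Finset.mul_sum]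
    apply Fintype.sum_equiv (Equiv.addRight (1 : Fin n))
    intro i
    simp only [Equiv.coe_addRight]
    rw [conj_ee, conj_ee]
    have hsplit : (-((i + 1) * j)) = (-(i * j)) + (-j) := by open Fin.CommRing in ring
    rw [hsplit, ee_add]
    have := ee_neg_mul n j
    linear_combination (-(f (i + 1) : ℂ) * ee n (-(i * j))) * this
  push_cast
  simp_rw [sub_mul]
  rw [Finset.sum_sub_distrib, h2]
  ring

lemma coef_zero (f : Fin n → ℝ) (h0 : ∑ i, f i = 0) : coef n f 0 = 0 := by
  unfold coef
  simp only [mul_zero, ee_zero, _root_.map_one, mul_one]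
  rw [← Complex.ofReal_sum]
  rw [h0]
  simp

lemma ee_eq_exp (a : Fin n) : ee n a = Complex.exp (((2 * π * a / n : ℝ) : ℂ) * Complex.I) := by
  unfold ee zz
  rw [← Complex.exp_nat_mul]
  congr 1
  push_cast
  have hn0 : (n : ℂ) ≠ 0 := Nat.cast_ne_zero.mpr (NeZero.ne n)
  field_simp

lemma normSq_one_sub_exp (θ : ℝ) :
    Complex.normSq (1 - Complex.exp ((θ : ℂ) * Complex.I)) = 2 - 2 * Real.cos θ := by
  rw [Complex.normSq_apply]
  simp only [Complex.sub_re, Complex.sub_im, Complex.one_re, Complex.one_im,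
    Complex.exp_ofReal_mul_I_re, Complex.exp_ofReal_mul_I_im]
  nlinarith [Real.sin_sq_add_cos_sq θ]

lemma cos_mono_aux (m : ℕ) (h1 : 1 ≤ m) (h2 : 2 * m ≤ n) :
    cos (2 * π * m / n) ≤ cos (2 * π / n) := by
  have hnpos : (0 : ℝ) < n := by
    have := NeZero.pos n; exact_mod_cast this
  have hπ := Real.pi_pos
  have hm : (1 : ℝ) ≤ m := by exact_mod_cast h1
  have hm2 : (2 : ℝ) * m ≤ n := by exact_mod_cast h2
  apply Real.cos_le_cos_of_nonneg_of_le_pi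
  · positivity
  · rw [div_le_iff₀ hnpos]
    nlinarith
  · rw [div_le_div_iff₀ hnpos hnpos]
    nlinarith [mul_le_mul_of_nonneg_left (mul_le_mul_of_nonneg_right hm hnpos.le)
      (by positivity : (0:ℝ) ≤ 2 * π)]

lemma cos_mono (j : ℕ) (h1 : 1 ≤ j) (h2 : j < n) :
    cos (2 * π * j / n) ≤ cos (2 * π / n) := by
  rcases le_or_gt (2 * j) n with hc | hc
  · exact cos_mono_aux n j h1 hc
  · have hnpos : (0 : ℝ) < n := by
      have := NeZero.pos n; exact_mod_cast this
    have heq : 2 * π * ((n : ℝ) - j) / n = 2 * π - 2 * π * j / n := by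
      field_simp
    have hcast : ((n - j : ℕ) : ℝ) = (n : ℝ) - j := by
      rw [Nat.cast_sub h2.le]
    have hcos : cos (2 * π * j / n) = cos (2 * π * ((n - j : ℕ) : ℝ) / n) := by
      rw [hcast, heq, Real.cos_sub, Real.cos_two_pi, Real.sin_two_pi]
      ring
    rw [hcos]
    exact cos_mono_aux n (n - j) (by omega) (by omega)

lemma normSq_bound (j : Fin n) (hj : j ≠ 0) :
    4 * sin (π / n) ^ 2 ≤ Complex.normSq (1 - ee n j) := by
  rw [ee_eq_exp, normSq_one_sub_exp]
  have h4 : 4 * sin (π / n) ^ 2 = 2 - 2 * cos (2 * π / n) := by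
    rw [show 2 * π / (n : ℝ) = 2 * (π / n) by ring, Real.cos_two_mul, Real.sin_sq]
    ring
  rw [h4]
  have hjv : 1 ≤ (j : ℕ) := Nat.pos_of_ne_zero (fun h => hj (Fin.ext h))
  have := cos_mono n (j : ℕ) hjv j.isLt
  linarith

lemma poincare_scalar (h : Fin n → ℝ) (h0 : ∑ i, h i = 0) :
    4 * sin (π / n) ^ 2 * ∑ i, h i ^ 2 ≤ ∑ i, (h i - h (i + 1)) ^ 2 := by
  have hnpos : (0 : ℝ) < n := by
    have := NeZero.pos n; exact_mod_cast this
  have hd := parseval n (fun i => h i - h (i + 1))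
  have hh := parseval n h
  have hcd : ∀ j, Complex.normSq (coef n (fun i => h i - h (i + 1)) j)
      = Complex.normSq (1 - ee n j) * Complex.normSq (coef n h j) := by
    intro j
    rw [coef_shift, Complex.normSq_mul]
  have hbound : 4 * sin (π / n) ^ 2 * ∑ j, Complex.normSq (coef n h j)
      ≤ ∑ j, Complex.normSq (coef n (fun i => h i - h (i + 1)) j) := by
    rw [Finset.mul_sum]
    apply Finset.sum_le_sum
    intro j _
    rcases eq_or_ne j 0 with rfl | hj
    · rw [hcd 0, coef_zero n h h0]
      simp
    · rw [hcd j]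
      exact mul_le_mul_of_nonneg_right (normSq_bound n j hj) (Complex.normSq_nonneg _)
  have hmain : (n : ℝ) * (4 * sin (π / n) ^ 2 * ∑ i, h i ^ 2)
      ≤ (n : ℝ) * ∑ i, (h i - h (i + 1)) ^ 2 := by
    calc (n : ℝ) * (4 * sin (π / n) ^ 2 * ∑ i, h i ^ 2)
        = 4 * sin (π / n) ^ 2 * ((n : ℝ) * ∑ i, h i ^ 2) := by ring
      _ = 4 * sin (π / n) ^ 2 * ∑ j, Complex.normSq (coef n h j) := by rw [hh]
      _ ≤ ∑ j, Complex.normSq (coef n (fun i => h i - h (i + 1)) j) := hbound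
      _ = (n : ℝ) * ∑ i, (h i - h (i + 1)) ^ 2 := hd
  exact le_of_mul_le_mul_left hmain hnpos

end parseval
section LA
variable (n : ℕ) [NeZero n]

lemma sum_shift {M : Type*} [AddCommMonoid M] (F : Fin n → M) :
    ∑ i, F (i + 1) = ∑ i, F i :=
  Fintype.sum_equiv (Equiv.addRight (1 : Fin n)) _ _ (fun _ => rfl)

lemma applyMat_one (g : Fin n → EuclideanSpace ℝ (Fin 3)) : applyMat 1 g = g := by
  funext i
  unfold applyMat
  simp [Matrix.one_apply, ite_smul]

lemma applyMat_mul (M N : Matrix (Fin n) (Fin n) ℝ) (g : Fin n → EuclideanSpace ℝ (Fin 3)) :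
    applyMat (M * N) g = applyMat M (applyMat N g) := by
  funext i
  unfold applyMat
  calc ∑ j, (M * N) i j • g j
      = ∑ j, ∑ k, (M i k * N k j) • g j := by
        simp_rw [Matrix.mul_apply, Finset.sum_smul]
    _ = ∑ k, ∑ j, (M i k * N k j) • g j := Finset.sum_comm
    _ = ∑ k, M i k • ∑ j, N k j • g j := by
        simp_rw [Finset.smul_sum, mul_smul]

lemma applyMat_sub (M : Matrix (Fin n) (Fin n) ℝ) (g g' : Fin n → EuclideanSpace ℝ (Fin 3)) :
    applyMat M (g - g') = applyMat M g - applyMat M g' := by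
  funext i
  unfold applyMat
  simp [smul_sub, Finset.sum_sub_distrib]

lemma applyMat_shiftMat (g : Fin n → EuclideanSpace ℝ (Fin 3)) :
    applyMat (shiftMat n) g = shiftTup g := by
  funext i
  unfold applyMat shiftMat shiftTup
  simp [ite_smul]

lemma TTt : shiftMat n * (shiftMat n)ᵀ = 1 := by
  ext i j
  simp [Matrix.mul_apply, shiftMat, Matrix.one_apply, ite_and, eq_comm]

lemma TtT : (shiftMat n)ᵀ * shiftMat n = 1 := mul_eq_one_comm.mp (TTt n)

lemma commBT : Bmat n * shiftMat n = shiftMat n * Bmat n := by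
  unfold Bmat
  rw [sub_mul, sub_mul, mul_sub, mul_sub]
  rw [smul_mul_assoc, mul_smul_comm, one_mul, mul_one, TTt, TtT]

lemma mulVecB (v : Fin n → ℝ) (i : Fin n) :
    (Bmat n).mulVec v i = 3 * v i - v (i + 1) - v (i - 1) := by
  unfold Bmat Matrix.mulVec dotProduct
  have hc : ∀ j : Fin n, (i = j + 1) ↔ (j = i - 1) := by
    intro j
    rw [eq_sub_iff_add_eq]
    exact eq_comm
  simp_rw [Matrix.sub_apply, Matrix.smul_apply, Matrix.one_apply, Matrix.transpose_apply,
    shiftMat, Matrix.of_apply, hc, sub_mul, Finset.sum_sub_distrib]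
  simp [ite_mul, Finset.sum_ite_eq, Finset.sum_ite_eq']

lemma quadB (v : Fin n → ℝ) :
    v ⬝ᵥ (Bmat n).mulVec v = (∑ i, v i ^ 2) + ∑ i, (v i - v (i + 1)) ^ 2 := by
  have e1 : ∑ i, v i * v (i - 1) = ∑ i, v i * v (i + 1) := by
    rw [← sum_shift n (fun i => v i * v (i - 1))]
    refine Finset.sum_congr rfl fun i _ => ?_
    rw [add_sub_cancel_right]
    ring
  have e2 : ∑ i, v (i + 1) ^ 2 = ∑ i, v i ^ 2 := sum_shift n (fun i => v i ^ 2)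
  have lhs : v ⬝ᵥ (Bmat n).mulVec v
      = (∑ i, 3 * v i ^ 2) - (∑ i, v i * v (i + 1)) - ∑ i, v i * v (i - 1) := by
    rw [← Finset.sum_sub_distrib, ← Finset.sum_sub_distrib]
    unfold dotProduct
    refine Finset.sum_congr rfl fun i _ => ?_
    rw [mulVecB]
    ring
  have rhs : ∑ i, (v i - v (i + 1)) ^ 2
      = (∑ i, v i ^ 2) - 2 * (∑ i, v i * v (i + 1)) + ∑ i, v (i + 1) ^ 2 := by
    rw [Finset.mul_sum, ← Finset.sum_sub_distrib, ← Finset.sum_add_distrib]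
    refine Finset.sum_congr rfl fun i _ => ?_
    ring
  have h3 : ∑ i, 3 * v i ^ 2 = 3 * ∑ i, v i ^ 2 := by rw [Finset.mul_sum]
  rw [lhs, rhs, h3]
  linarith

lemma detB_ne : (Bmat n).det ≠ 0 := by
  intro hdet
  obtain ⟨v, hv0, hv⟩ := (Matrix.exists_mulVec_eq_zero_iff).mpr hdet
  have hq := quadB n v
  rw [hv] at hq
  simp only [dotProduct_zero] at hq
  have hs1 : (0:ℝ) ≤ ∑ i, v i ^ 2 := by positivity
  have hs2 : (0:ℝ) ≤ ∑ i, (v i - v (i + 1)) ^ 2 := by positivity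
  have h1 : ∑ i, v i ^ 2 = 0 := by linarith
  apply hv0
  funext i
  have := (Finset.sum_eq_zero_iff_of_nonneg (fun i _ => sq_nonneg (v i))).mp h1 i (Finset.mem_univ i)
  have : v i = 0 := by nlinarith
  simpa using this

lemma hBA : Bmat n * Amat n = 1 := Matrix.mul_nonsing_inv _ (Ne.isUnit (detB_ne n))

lemma hAB : Amat n * Bmat n = 1 := Matrix.nonsing_inv_mul _ (Ne.isUnit (detB_ne n))

lemma commAT : Commute (Amat n) (shiftMat n) := by
  unfold Commute SemiconjBy
  calc Amat n * shiftMat n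
      = Amat n * shiftMat n * (Bmat n * Amat n) := by rw [hBA, mul_one]
    _ = Amat n * (shiftMat n * Bmat n) * Amat n := by rw [← mul_assoc, ← mul_assoc]
    _ = Amat n * (Bmat n * shiftMat n) * Amat n := by rw [commBT]
    _ = (Amat n * Bmat n) * (shiftMat n * Amat n) := by rw [← mul_assoc, ← mul_assoc]
    _ = shiftMat n * Amat n := by rw [hAB, one_mul]

lemma shiftTup_applyMat (M : Matrix (Fin n) (Fin n) ℝ) (hc : Commute M (shiftMat n))
    (g : Fin n → EuclideanSpace ℝ (Fin 3)) :
    shiftTup (applyMat M g) = applyMat M (shiftTup g) := by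
  rw [← applyMat_shiftMat n (applyMat M g), ← applyMat_mul, ← hc.eq, applyMat_mul,
    applyMat_shiftMat]

lemma colsum_B (j : Fin n) : ∑ i, Bmat n i j = 1 := by
  unfold Bmat
  have hc2 : ∀ i : Fin n, (j = i + 1) ↔ (i = j - 1) := by
    intro i
    rw [eq_sub_iff_add_eq]
    exact eq_comm
  simp_rw [Matrix.sub_apply, Matrix.smul_apply, Matrix.one_apply, Matrix.transpose_apply,
    shiftMat, Matrix.of_apply, hc2, Finset.sum_sub_distrib]
  simp [Finset.sum_ite_eq, Finset.sum_ite_eq']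
  norm_num

lemma colsum_A (j : Fin n) : ∑ i, Amat n i j = 1 := by
  have h1 : (fun _ => (1:ℝ)) ᵥ* (Bmat n) = fun _ => (1:ℝ) := by
    funext j'
    unfold Matrix.vecMul dotProduct
    simp only [one_mul]
    exact colsum_B n j'
  have h2 : (fun _ => (1:ℝ)) ᵥ* (Amat n) = fun _ => (1:ℝ) := by
    conv_lhs => rw [← h1]
    rw [Matrix.vecMul_vecMul, hBA, Matrix.vecMul_one]
  have := congrFun h2 j
  unfold Matrix.vecMul dotProduct at this
  simpa using this

end LA
section IP
open RealInnerProductSpace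
variable (n : ℕ) [NeZero n]

lemma sum_shift' {M : Type*} [AddCommMonoid M] (F : Fin n → M) :
    ∑ i, F (i + 1) = ∑ i, F i :=
  Fintype.sum_equiv (Equiv.addRight (1 : Fin n)) _ _ (fun _ => rfl)

lemma norm_sq_E3 (x : EuclideanSpace ℝ (Fin 3)) : ‖x‖ ^ 2 = ∑ t, x t ^ 2 := by
  rw [EuclideanSpace.norm_eq, Real.sq_sqrt (by positivity)]
  simp [Real.norm_eq_abs, sq_abs]

lemma sum_apply_E3 (u : Fin n → EuclideanSpace ℝ (Fin 3)) (t : Fin 3) :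
    (∑ i, u i) t = ∑ i, u i t :=
  by simp [WithLp.ofLp_sum]

lemma sqE_nonneg (g : Fin n → EuclideanSpace ℝ (Fin 3)) : 0 ≤ sqE g := by
  unfold sqE; positivity

lemma poincare_vec (u : Fin n → EuclideanSpace ℝ (Fin 3)) (h0 : ∑ i, u i = 0) :
    4 * sin (π / n) ^ 2 * sqE u ≤ sqE (u - shiftTup u) := by
  unfold sqE
  have expand : ∀ w : Fin n → EuclideanSpace ℝ (Fin 3),
      ∑ i, ‖w i‖ ^ 2 = ∑ t : Fin 3, ∑ i, (w i t) ^ 2 := by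
    intro w
    rw [Finset.sum_comm]
    exact Finset.sum_congr rfl fun i _ => norm_sq_E3 _
  rw [expand, expand, Finset.mul_sum]
  apply Finset.sum_le_sum
  intro t _
  have h0t : ∑ i, u i t = 0 := by
    rw [← sum_apply_E3 n u t, h0]
    rfl
  have hp := poincare_scalar n (fun i => u i t) h0t
  have heq : ∀ i : Fin n, ((u - shiftTup u) i) t = u i t - u (i + 1) t := by
    intro i
    rw [Pi.sub_apply, PiLp.sub_apply]
    rfl
  simp_rw [heq]
  exact hp

end IP

section Main
open RealInnerProductSpace
variable (n : ℕ) [NeZero n]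

lemma applyMat_B (u : Fin n → EuclideanSpace ℝ (Fin 3)) (i : Fin n) :
    applyMat (Bmat n) u i = (3:ℝ) • u i - u (i + 1) - u (i - 1) := by
  unfold applyMat Bmat
  have hc : ∀ j : Fin n, (i = j + 1) ↔ (j = i - 1) := by
    intro j
    rw [eq_sub_iff_add_eq]
    exact eq_comm
  simp_rw [Matrix.sub_apply, Matrix.smul_apply, Matrix.one_apply, Matrix.transpose_apply,
    shiftMat, Matrix.of_apply, hc, sub_smul, Finset.sum_sub_distrib]
  simp [mul_ite, ite_smul, Finset.sum_ite_eq, Finset.sum_ite_eq']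

lemma ipB (u : Fin n → EuclideanSpace ℝ (Fin 3)) :
    ∑ i, (inner ℝ (u i) (applyMat (Bmat n) u i) : ℝ) = sqE u + sqE (u - shiftTup u) := by
  have e1 : ∑ i, (inner ℝ (u i) (u (i - 1)) : ℝ) = ∑ i, (inner ℝ (u i) (u (i + 1)) : ℝ) := by
    rw [← sum_shift' n (fun i => (inner ℝ (u i) (u (i - 1)) : ℝ))]
    refine Finset.sum_congr rfl fun i _ => ?_
    rw [add_sub_cancel_right, real_inner_comm]
  have e2 : ∑ i, ‖u (i + 1)‖ ^ 2 = ∑ i, ‖u i‖ ^ 2 := sum_shift' n (fun i => ‖u i‖ ^ 2)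
  have lhs : ∑ i, (inner ℝ (u i) (applyMat (Bmat n) u i) : ℝ)
      = (∑ i, 3 * ‖u i‖ ^ 2) - (∑ i, (inner ℝ (u i) (u (i + 1)) : ℝ)) - ∑ i, (inner ℝ (u i) (u (i - 1)) : ℝ) := by
    rw [← Finset.sum_sub_distrib, ← Finset.sum_sub_distrib]
    refine Finset.sum_congr rfl fun i _ => ?_
    rw [applyMat_B, inner_sub_right, inner_sub_right, real_inner_smul_right,
      real_inner_self_eq_norm_sq]
  have rhs : sqE (u - shiftTup u)
      = (∑ i, ‖u i‖ ^ 2) - 2 * (∑ i, (inner ℝ (u i) (u (i + 1)) : ℝ)) + ∑ i, ‖u (i + 1)‖ ^ 2 := by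
    unfold sqE
    rw [Finset.mul_sum, ← Finset.sum_sub_distrib, ← Finset.sum_add_distrib]
    refine Finset.sum_congr rfl fun i _ => ?_
    have hsub : (u - shiftTup u) i = u i - u (i + 1) := rfl
    rw [hsub, norm_sub_sq_real]
  have h3 : (∑ i, 3 * ‖u i‖ ^ 2) = 3 * ∑ i, ‖u i‖ ^ 2 := by rw [Finset.mul_sum]
  rw [lhs, rhs, h3]
  unfold sqE
  linarith

lemma meanzero_applyA (g : Fin n → EuclideanSpace ℝ (Fin 3)) (hg : ∑ i, g i = 0) :
    ∑ i, applyMat (Amat n) g i = 0 := by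
  unfold applyMat
  rw [Finset.sum_comm]
  have hcol : ∀ j, ∑ i, Amat n i j • g j = g j := by
    intro j
    rw [← Finset.sum_smul, colsum_A, one_smul]
  simp_rw [hcol]
  exact hg

lemma lam1_nonneg : 0 ≤ lam1 n := by
  unfold lam1; positivity

lemma step_bound (g : Fin n → EuclideanSpace ℝ (Fin 3)) (hg : ∑ i, g i = 0) :
    sqE (applyMat (Amat n) g) ≤ lam1 n ^ 2 * sqE g := by
  set s := Real.sin (Real.pi / n) with hs
  set μ : ℝ := 1 + 4 * s ^ 2 with hμ
  have hμpos : 0 < μ := by positivity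
  have hlam : lam1 n = 1 / μ := by rw [hμ, hs]; rfl
  set u := applyMat (Amat n) g with hu
  have hu0 : ∑ i, u i = 0 := meanzero_applyA n g hg
  have hBu : applyMat (Bmat n) u = g := by
    rw [hu, ← applyMat_mul, hBA, applyMat_one]
  have hip : sqE u + sqE (u - shiftTup u) = ∑ i, (inner ℝ (u i) (g i) : ℝ) := by
    rw [← hBu]
    exact (ipB n u).symm
  have hpo := poincare_vec n u hu0
  have hmu : μ * sqE u ≤ ∑ i, (inner ℝ (u i) (g i) : ℝ) := by
    rw [← hip]
    have hr : μ * sqE u = sqE u + 4 * s ^ 2 * sqE u := by rw [hμ]; ring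
    rw [← hs] at hpo
    linarith
  have hcs : ∑ i, (inner ℝ (u i) (g i) : ℝ) ≤ ∑ i, ‖u i‖ * ‖g i‖ :=
    Finset.sum_le_sum fun i _ => real_inner_le_norm _ _
  have hcs2 : (∑ i, ‖u i‖ * ‖g i‖) ^ 2 ≤ sqE u * sqE g := by
    unfold sqE
    exact Finset.sum_mul_sq_le_sq_mul_sq Finset.univ _ _
  have h1 : μ * sqE u ≤ ∑ i, ‖u i‖ * ‖g i‖ := le_trans hmu hcs
  have hnn : 0 ≤ μ * sqE u := mul_nonneg hμpos.le (sqE_nonneg n u)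
  have h2 : (μ * sqE u) ^ 2 ≤ sqE u * sqE g := by
    calc (μ * sqE u) ^ 2 ≤ (∑ i, ‖u i‖ * ‖g i‖) ^ 2 := by
          exact pow_le_pow_left₀ hnn h1 2
      _ ≤ sqE u * sqE g := hcs2
  rcases eq_or_lt_of_le (sqE_nonneg n u) with h0 | hpos
  · rw [← h0, hlam]
    have := sqE_nonneg n g
    positivity
  · have h3 : μ ^ 2 * sqE u ≤ sqE g := by nlinarith
    have h4 : sqE u ≤ sqE g / μ ^ 2 := by
      rw [le_div_iff₀ (by positivity)]
      linarith
    calc sqE u ≤ sqE g / μ ^ 2 := h4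
      _ = lam1 n ^ 2 * sqE g := by rw [hlam, div_pow, one_pow]; ring

lemma main_bound (k : ℕ) :
    ∀ g : Fin n → EuclideanSpace ℝ (Fin 3), (∑ i, g i = 0) →
      sqE (applyMat (Amat n ^ k) g) ≤ lam1 n ^ (2 * k) * sqE g := by
  induction k with
  | zero =>
    intro g hg
    simp [pow_zero, applyMat_one]
  | succ k ih =>
    intro g hg
    have hg' : ∑ i, applyMat (Amat n) g i = 0 := meanzero_applyA n g hg
    rw [pow_succ, applyMat_mul]
    calc sqE (applyMat (Amat n ^ k) (applyMat (Amat n) g))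
        ≤ lam1 n ^ (2 * k) * sqE (applyMat (Amat n) g) := ih _ hg'
      _ ≤ lam1 n ^ (2 * k) * (lam1 n ^ 2 * sqE g) :=
          mul_le_mul_of_nonneg_left (step_bound n g hg) (pow_nonneg (lam1_nonneg n) _)
      _ = lam1 n ^ (2 * (k + 1)) * sqE g := by
          rw [show 2 * (k + 1) = 2 * k + 2 from by ring, pow_add]
          ring

end Main

theorem stmt14 (n : ℕ) [NeZero n] (hn : 3 ≤ n) (f0 : Fin n → EuclideanSpace ℝ (Fin 3)) (k : ℕ) :
    sqE (applyMat (Amat n ^ k) f0 - shiftTup (applyMat (Amat n ^ k) f0)) ≤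
      lam1 n ^ (2 * k) * sqE (f0 - shiftTup f0) := by
  have hcommk : Commute (Amat n ^ k) (shiftMat n) := ((commAT n).pow_left k)
  have hshift : shiftTup (applyMat (Amat n ^ k) f0) = applyMat (Amat n ^ k) (shiftTup f0) :=
    shiftTup_applyMat n _ hcommk f0
  rw [hshift, ← applyMat_sub]
  apply main_bound
  show ∑ i, (f0 i - f0 (i + 1)) = 0
  rw [Finset.sum_sub_distrib, sum_shift' n (fun i => f0 i), sub_self]
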